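/- Let F(x) = e^x - x - 1, a formal power series with lowest-order term x^2/2. For a nonnegative integer z, define the potential polynomials G_n^{(z)} by ((x^2/2)/F(x))^z = Σ_{n≥0} G_n^{(z)} x^n/n!. Then G_n^{(z)} = Σ_{i=0}^{n} (-1)^i C(z+i-1, i) C(z+n, n-i) 2^i (n! i!/(n+2i)!) B_{n+2i, i}, where B_{m,i} is the coefficient defined by (F(x))^i = i! Σ_{m≥0} B_{m,i} x^m/m!. -/

import Mathlib

open PowerSeries Finset

lemma coeff_pow_eq_zero_of_lt {h : ℚ⟦X⟧} (h0 : constantCoeff (R := ℚ) h = 0)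
    {m j : ℕ} (hmj : m < j) : coeff (R := ℚ) m (h ^ j) = 0 :=
  PowerSeries.X_pow_dvd_iff.mp
    (pow_dvd_pow_of_dvd (PowerSeries.X_dvd_iff.mpr h0) j) m hmj

lemma negbinom_coeff (h H : ℚ⟦X⟧) (h0 : constantCoeff (R := ℚ) h = 0)
    (hH : (1 + h) * H = 1) (z n : ℕ) :
    coeff (R := ℚ) n (H ^ z) =
      ∑ j ∈ range (n + 1), (-1) ^ j * ((z + j - 1).choose j : ℚ) * coeff (R := ℚ) n (h ^ j) := by
  induction z generalizing n with
  | zero =>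
    rw [pow_zero, Finset.sum_eq_single 0]
    · simp
    · intro j hj hj0
      rw [Nat.choose_eq_zero_of_lt (by omega)]
      simp
    · simp
  | succ z ihz =>
    induction n using Nat.strong_induction_on with
    | _ n ihn =>
    have key : H ^ (z + 1) = H ^ z - h * H ^ (z + 1) := by
      linear_combination (H ^ z) * hH
    have step1 : ∀ k ∈ range (n + 1),
        coeff (R := ℚ) k h * coeff (R := ℚ) (n - k) (H ^ (z + 1)) =
          ∑ j ∈ range (n + 1), (-1) ^ j * ((z + 1 + j - 1).choose j : ℚ) *
            (coeff (R := ℚ) k h * coeff (R := ℚ) (n - k) (h ^ j)) := by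
      intro k hk
      rcases Nat.eq_zero_or_pos k with rfl | hkpos
      · simp [PowerSeries.coeff_zero_eq_constantCoeff, h0]
      · rw [ihn (n - k) (by simp at hk; omega), Finset.mul_sum]
        rw [Finset.sum_subset (Finset.range_subset_range.2 (by omega : n - k + 1 ≤ n + 1))
          (fun j _ hj => by
            rw [coeff_pow_eq_zero_of_lt h0 (by simp at hj ⊢; omega)]
            ring)]
        exact Finset.sum_congr rfl fun j hj => by ring
    have e1 : coeff (R := ℚ) n (h * H ^ (z + 1)) =
        ∑ j ∈ range (n + 1), (-1) ^ j * ((z + 1 + j - 1).choose j : ℚ) *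
          coeff (R := ℚ) n (h ^ (j + 1)) := by
      rw [coeff_mul, Finset.Nat.sum_antidiagonal_eq_sum_range_succ_mk]
      rw [Finset.sum_congr rfl step1, Finset.sum_comm]
      refine Finset.sum_congr rfl fun j hj => ?_
      rw [← Finset.mul_sum, pow_succ', coeff_mul,
        Finset.Nat.sum_antidiagonal_eq_sum_range_succ_mk]
    rw [key, map_sub, ihz n, e1]
    simp only [show ∀ j : ℕ, z + 1 + j - 1 = z + j from fun j => by omega]
    have shift : ∑ j ∈ range (n + 1), (-1 : ℚ) ^ j * ((z + j).choose j : ℚ) *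
          coeff (R := ℚ) n (h ^ (j + 1))
        = ∑ j ∈ range (n + 1),
            ((-1 : ℚ) ^ j * ((z + j - 1).choose j : ℚ) * coeff (R := ℚ) n (h ^ j)
              - (-1 : ℚ) ^ j * ((z + j).choose j : ℚ) * coeff (R := ℚ) n (h ^ j)) := by
      rw [Finset.sum_range_succ, coeff_pow_eq_zero_of_lt h0 (by omega), mul_zero, add_zero]
      rw [Finset.sum_range_succ']
      have last : (-1 : ℚ) ^ 0 * (((z + 0 - 1).choose 0 : ℕ) : ℚ) * coeff (R := ℚ) n (h ^ 0)
          - (-1 : ℚ) ^ 0 * (((z + 0).choose 0 : ℕ) : ℚ) * coeff (R := ℚ) n (h ^ 0) = 0 := by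
        simp
      rw [last, add_zero]
      refine Finset.sum_congr rfl fun i hi => ?_
      have pascal : (z + (i + 1)).choose (i + 1) = (z + i).choose i + (z + i).choose (i + 1) := by
        have : z + (i + 1) = (z + i) + 1 := by omega
        rw [this, Nat.choose_succ_succ]
      have e : z + (i + 1) - 1 = z + i := by omega
      rw [e, pascal]
      push_cast
      ring
    rw [shift, Finset.sum_sub_distrib]
    ring
lemma coeff_one_add_X_pow (c q : ℕ) :
    coeff (R := ℚ) q ((1 + X) ^ c) = (c.choose q : ℚ) := by
  have expand : ((1 : ℚ⟦X⟧) + X) ^ c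
      = ∑ m ∈ range (c + 1), X ^ m * PowerSeries.C (R := ℚ) (c.choose m : ℚ) := by
    rw [add_comm (1 : ℚ⟦X⟧) X, add_pow]
    refine Finset.sum_congr rfl fun m hm => ?_
    rw [one_pow, ← map_natCast (PowerSeries.C (R := ℚ)) (c.choose m), mul_one]
  rw [expand, map_sum]
  have term : ∀ m, coeff (R := ℚ) q (X ^ m * PowerSeries.C (R := ℚ) (c.choose m : ℚ))
      = if q = m then (c.choose m : ℚ) else 0 := by
    intro m
    rw [PowerSeries.coeff_mul_C, PowerSeries.coeff_X_pow]
    split <;> simp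
  simp only [term]
  rcases le_or_gt q c with hqc | hqc
  · rw [Finset.sum_ite_eq (range (c + 1)) q (fun m => (c.choose m : ℚ)),
      if_pos (Finset.mem_range.2 (by omega))]
  · rw [Finset.sum_ite_eq, if_neg (by simp; omega), Nat.choose_eq_zero_of_lt hqc,
      Nat.cast_zero]
lemma coeff_inv_one_add_X_pow (w q : ℕ) :
    coeff (R := ℚ) q ((((1 : ℚ⟦X⟧) + X)⁻¹) ^ w) = (-1) ^ q * ((w + q - 1).choose q : ℚ) := by
  have h1 : ((1 : ℚ⟦X⟧) + X) * (1 + X)⁻¹ = 1 :=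
    PowerSeries.mul_inv_cancel _ (by simp)
  rw [negbinom_coeff X _ (by simp) h1 w q, Finset.sum_eq_single q]
  · rw [PowerSeries.coeff_X_pow, if_pos rfl, mul_one]
  · intro j hj hjq
    rw [PowerSeries.coeff_X_pow, if_neg (Ne.symm hjq), mul_zero]
  · intro hq
    exact absurd (Finset.self_mem_range_succ q) hq

lemma s_id (w t : ℕ) :
    ∑ k ∈ range (t + 1),
      (-1 : ℚ) ^ k * ((w + k - 1).choose k : ℚ) * ((w + t).choose (t - k) : ℚ) = 1 := by
  have h1 : ((1 : ℚ⟦X⟧) + X) * (1 + X)⁻¹ = 1 :=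
    PowerSeries.mul_inv_cancel _ (by simp)
  have key : (((1 : ℚ⟦X⟧) + X)⁻¹) ^ w * (1 + X) ^ (w + t) = (1 + X) ^ t := by
    rw [pow_add, ← mul_assoc, ← mul_pow, mul_comm (((1 : ℚ⟦X⟧) + X)⁻¹) _, h1, one_pow,
      one_mul]
  have hc := congrArg (coeff (R := ℚ) t) key
  rw [coeff_mul, Finset.Nat.sum_antidiagonal_eq_sum_range_succ_mk,
    coeff_one_add_X_pow, Nat.choose_self, Nat.cast_one] at hc
  simp only [coeff_inv_one_add_X_pow, coeff_one_add_X_pow] at hc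
  exact hc

lemma choose_mul_choose (z i j : ℕ) (hji : j ≤ i) :
    ((z + i - 1).choose i : ℚ) * (i.choose j : ℚ) =
      ((z + j - 1).choose j : ℚ) * ((z + i - 1).choose (i - j) : ℚ) := by
  rcases z with _ | w
  · rcases Nat.eq_zero_or_pos i with rfl | hi
    · interval_cases j
      simp
    · have l1 : (0 + i - 1).choose i = 0 := Nat.choose_eq_zero_of_lt (by omega)
      rcases Nat.eq_zero_or_pos j with rfl | hj
      · have l2 : (0 + i - 1).choose (i - 0) = 0 := Nat.choose_eq_zero_of_lt (by omega)
        rw [l1, l2]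
        simp
      · have l3 : (0 + j - 1).choose j = 0 := Nat.choose_eq_zero_of_lt (by omega)
        rw [l1, l3]
        simp
  · have e1 : w + 1 + i - 1 = w + i := by omega
    have e2 : w + 1 + j - 1 = w + j := by omega
    rw [e1, e2]
    rw [Nat.cast_choose ℚ (by omega : i ≤ w + i), Nat.cast_choose ℚ hji,
      Nat.cast_choose ℚ (by omega : j ≤ w + j),
      Nat.cast_choose ℚ (by omega : i - j ≤ w + i)]
    rw [show w + i - i = w by omega, show w + j - j = w by omega,
      show w + i - (i - j) = w + j by omega]
    have fne : ∀ m : ℕ, (m.factorial : ℚ) ≠ 0 := fun m => Nat.cast_ne_zero.2 m.factorial_ne_zero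
    field_simp

lemma T_id (z n j : ℕ) (hj : j ≤ n) :
    ∑ i ∈ range (n + 1), (-1 : ℚ) ^ i * ((z + i - 1).choose i : ℚ) *
        ((z + n).choose (n - i) : ℚ) * (i.choose j : ℚ)
      = (-1) ^ j * ((z + j - 1).choose j : ℚ) := by
  rw [Finset.range_eq_Ico, ← Finset.sum_Ico_consecutive _ (Nat.zero_le j) (by omega : j ≤ n + 1)]
  have h1 : ∑ i ∈ Ico 0 j, (-1 : ℚ) ^ i * ((z + i - 1).choose i : ℚ) *
      ((z + n).choose (n - i) : ℚ) * (i.choose j : ℚ) = 0 := by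
    refine Finset.sum_eq_zero fun i hi => ?_
    rw [Nat.choose_eq_zero_of_lt (Finset.mem_Ico.1 hi).2, Nat.cast_zero, mul_zero]
  rw [h1, zero_add, Finset.sum_Ico_eq_sum_range, show n + 1 - j = (n - j) + 1 by omega]
  have main : ∀ k ∈ range ((n - j) + 1),
      (-1 : ℚ) ^ (j + k) * ((z + (j + k) - 1).choose (j + k) : ℚ) *
          ((z + n).choose (n - (j + k)) : ℚ) * ((j + k).choose j : ℚ)
        = ((-1 : ℚ) ^ j * ((z + j - 1).choose j : ℚ)) *
            ((-1 : ℚ) ^ k * ((z + j + k - 1).choose k : ℚ) *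
              ((z + j + (n - j)).choose ((n - j) - k) : ℚ)) := by
    intro k hk
    have hcm := choose_mul_choose z (j + k) j (Nat.le_add_right j k)
    rw [show (j + k) - j = k by omega] at hcm
    rw [show z + j + k - 1 = z + (j + k) - 1 by omega, show z + j + (n - j) = z + n by omega,
      show (n - j) - k = n - (j + k) by omega, pow_add]
    calc (-1 : ℚ) ^ j * (-1 : ℚ) ^ k * ((z + (j + k) - 1).choose (j + k) : ℚ) *
          ((z + n).choose (n - (j + k)) : ℚ) * ((j + k).choose j : ℚ)
        = (-1 : ℚ) ^ j * (-1 : ℚ) ^ k *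
            (((z + (j + k) - 1).choose (j + k) : ℚ) * ((j + k).choose j : ℚ)) *
            ((z + n).choose (n - (j + k)) : ℚ) := by ring
      _ = _ := by rw [hcm]; ring
  rw [Finset.sum_congr rfl main, ← Finset.mul_sum, s_id (z + j) (n - j), mul_one]
/-- Howard's theorem specialized to `F(x) = e^x - x - 1`: with `B m i` the coefficients
defined by `F^i = i! Σ_m B_{m,i} x^m/m!` and `H = (x²/2)/F` (so `F * H = x²/2`), the
potential polynomials `G_n^{(z)} = n! · [x^n] H^z` satisfy
`G_n^{(z)} = Σ_{i=0}^n (-1)^i C(z+i-1,i) C(z+n,n-i) 2^i (n! i!/(n+2i)!) B_{n+2i,i}`. -/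
theorem potential_polynomial_formula (z : ℕ) (B : ℕ → ℕ → ℚ)
    (hB : ∀ i m : ℕ, PowerSeries.coeff (R := ℚ) m ((PowerSeries.exp ℚ - PowerSeries.X - 1) ^ i) =
      (i.factorial : ℚ) * B m i / (m.factorial : ℚ))
    (H : PowerSeries ℚ)
    (hH : (PowerSeries.exp ℚ - PowerSeries.X - 1) * H =
      PowerSeries.C (R := ℚ) (1 / 2) * PowerSeries.X ^ 2)
    (n : ℕ) :
    (n.factorial : ℚ) * PowerSeries.coeff (R := ℚ) n (H ^ z) =
      ∑ i ∈ Finset.range (n + 1),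
        (-1) ^ i * ((z + i - 1).choose i : ℚ) * ((z + n).choose (n - i) : ℚ) * 2 ^ i *
          ((n.factorial : ℚ) * (i.factorial : ℚ) / ((n + 2 * i).factorial : ℚ)) *
          B (n + 2 * i) i := by
  set F : ℚ⟦X⟧ := PowerSeries.exp ℚ - PowerSeries.X - 1 with hF
  set g : ℚ⟦X⟧ := PowerSeries.mk fun m => 2 * coeff (R := ℚ) (m + 2) F with hg
  -- basic coefficients of F
  have hF0 : coeff (R := ℚ) 0 F = 0 := by
    simp [hF, PowerSeries.coeff_exp]
  have hF1 : coeff (R := ℚ) 1 F = 0 := by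
    simp [hF, PowerSeries.coeff_exp]
  have hF2 : coeff (R := ℚ) 2 F = 1 / 2 := by
    simp [hF, PowerSeries.coeff_exp, PowerSeries.coeff_X]
  -- F = X^2 * (C(1/2) * g)
  have hFg : X ^ 2 * (PowerSeries.C (R := ℚ) (1 / 2) * g) = F := by
    ext m
    rcases m with _ | _ | m
    · rw [hF0]
      simp [PowerSeries.coeff_mul, PowerSeries.coeff_X_pow]
    · rw [hF1]
      simp [PowerSeries.coeff_X_pow_mul']
    · show coeff (R := ℚ) (m + 2) (X ^ 2 * (PowerSeries.C (R := ℚ) (1 / 2) * g)) = coeff (R := ℚ) (m + 2) F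
      rw [PowerSeries.coeff_X_pow_mul, PowerSeries.coeff_C_mul, hg, PowerSeries.coeff_mk]
      ring
  have hg0 : constantCoeff (R := ℚ) g = 1 := by
    have : coeff (R := ℚ) 0 g = 1 := by
      rw [hg, PowerSeries.coeff_mk, hF2]; norm_num
    rwa [PowerSeries.coeff_zero_eq_constantCoeff] at this
  -- cancel to get g * H = 1
  have hXne : (X : ℚ⟦X⟧) ^ 2 ≠ 0 := pow_ne_zero _ PowerSeries.X_ne_zero
  have hCne : (PowerSeries.C (R := ℚ) (1 / 2)) ≠ 0 := by
    intro hc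
    have := congrArg (constantCoeff (R := ℚ)) hc
    simp at this
  have hgH : (1 + (g - 1)) * H = 1 := by
    have step : X ^ 2 * (PowerSeries.C (R := ℚ) (1 / 2) * (g * H)) = X ^ 2 * (PowerSeries.C (R := ℚ) (1 / 2) * 1) := by
      calc X ^ 2 * (PowerSeries.C (R := ℚ) (1 / 2) * (g * H)) = X ^ 2 * (PowerSeries.C (R := ℚ) (1 / 2) * g) * H := by ring
        _ = F * H := by rw [hFg]
        _ = PowerSeries.C (R := ℚ) (1 / 2) * X ^ 2 := hH
        _ = X ^ 2 * (PowerSeries.C (R := ℚ) (1 / 2) * 1) := by ring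
    have step2 := mul_left_cancel₀ hXne step
    have step3 := mul_left_cancel₀ hCne step2
    rw [show (1 : ℚ⟦X⟧) + (g - 1) = g by ring, step3]
  have hgm1 : constantCoeff (R := ℚ) (g - 1) = 0 := by
    rw [map_sub, hg0, map_one, sub_self]
  -- coefficient relation for F^i
  have hcF : ∀ i : ℕ, coeff (R := ℚ) (n + 2 * i) (F ^ i) = (1 / 2 : ℚ) ^ i * coeff (R := ℚ) n (g ^ i) := by
    intro i
    have hFi : F ^ i = X ^ (2 * i) * (PowerSeries.C (R := ℚ) ((1 / 2 : ℚ) ^ i) * g ^ i) := by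
      rw [← hFg, map_pow]
      rw [mul_pow, mul_pow, ← pow_mul]
    rw [hFi, PowerSeries.coeff_X_pow_mul, PowerSeries.coeff_C_mul]
  -- value of B
  have hBval : ∀ i : ℕ, B (n + 2 * i) i =
      ((n + 2 * i).factorial : ℚ) * ((1 / 2 : ℚ) ^ i * coeff (R := ℚ) n (g ^ i)) / (i.factorial : ℚ) := by
    intro i
    have h1 := hB i (n + 2 * i)
    rw [hcF i] at h1
    have hfi : (i.factorial : ℚ) ≠ 0 := Nat.cast_ne_zero.2 i.factorial_ne_zero
    have hfn : (((n + 2 * i).factorial : ℕ) : ℚ) ≠ 0 := Nat.cast_ne_zero.2 (n + 2 * i).factorial_ne_zero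
    field_simp at h1 ⊢
    linarith [h1]
  -- rewrite each term of the RHS
  have hterm : ∀ i ∈ range (n + 1),
      (-1 : ℚ) ^ i * ((z + i - 1).choose i : ℚ) * ((z + n).choose (n - i) : ℚ) * 2 ^ i *
          ((n.factorial : ℚ) * (i.factorial : ℚ) / ((n + 2 * i).factorial : ℚ)) *
          B (n + 2 * i) i
        = (n.factorial : ℚ) * ((-1) ^ i * ((z + i - 1).choose i : ℚ) *
            ((z + n).choose (n - i) : ℚ) * coeff (R := ℚ) n (g ^ i)) := by
    intro i _
    rw [hBval i]
    have hfi : (i.factorial : ℚ) ≠ 0 := Nat.cast_ne_zero.2 i.factorial_ne_zero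
    have hfn : (((n + 2 * i).factorial : ℕ) : ℚ) ≠ 0 := Nat.cast_ne_zero.2 (n + 2 * i).factorial_ne_zero
    have h2 : (2 : ℚ) ^ i * (1 / 2 : ℚ) ^ i = 1 := by
      rw [← mul_pow]; norm_num
    field_simp
    linear_combination (((z + i - 1).choose i : ℚ) * ((z + n).choose (n - i) : ℚ) * coeff (R := ℚ) n (g ^ i)) * h2
  rw [Finset.sum_congr rfl hterm, ← Finset.mul_sum]
  congr 1
  -- expand g^i binomially
  have hgexp : ∀ i ∈ range (n + 1), coeff (R := ℚ) n (g ^ i)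
      = ∑ j ∈ range (n + 1), (i.choose j : ℚ) * coeff (R := ℚ) n ((g - 1) ^ j) := by
    intro i hi
    have expand := congrArg (coeff (R := ℚ) n) (add_pow (g - 1) 1 i)
    rw [sub_add_cancel] at expand
    rw [expand, map_sum]
    have term : ∀ j, coeff (R := ℚ) n ((g - 1) ^ j * 1 ^ (i - j) * ((i.choose j : ℕ) : ℚ⟦X⟧))
        = (i.choose j : ℚ) * coeff (R := ℚ) n ((g - 1) ^ j) := by
      intro j
      rw [one_pow, mul_one, ← map_natCast (PowerSeries.C (R := ℚ)) (i.choose j),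
        PowerSeries.coeff_mul_C]
      ring
    rw [Finset.sum_congr rfl fun j _ => term j]
    refine Finset.sum_subset (Finset.range_subset_range.2 (by simp at hi; omega)) fun j _ hj => ?_
    rw [Nat.choose_eq_zero_of_lt (by simp at hj ⊢; omega), Nat.cast_zero, zero_mul]
  rw [Finset.sum_congr rfl fun i hi => by rw [hgexp i hi]]
  symm
  -- swap sums and apply T_id
  calc ∑ i ∈ range (n + 1), (-1 : ℚ) ^ i * ((z + i - 1).choose i : ℚ) *
        ((z + n).choose (n - i) : ℚ) *
        ∑ j ∈ range (n + 1), (i.choose j : ℚ) * coeff (R := ℚ) n ((g - 1) ^ j)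
      = ∑ j ∈ range (n + 1), (∑ i ∈ range (n + 1), (-1 : ℚ) ^ i * ((z + i - 1).choose i : ℚ) *
          ((z + n).choose (n - i) : ℚ) * (i.choose j : ℚ)) * coeff (R := ℚ) n ((g - 1) ^ j) := by
        simp only [Finset.mul_sum]
        rw [Finset.sum_comm]
        refine Finset.sum_congr rfl fun j hj => ?_
        rw [Finset.sum_mul]
        exact Finset.sum_congr rfl fun i hi => by ring
    _ = ∑ j ∈ range (n + 1), (-1 : ℚ) ^ j * ((z + j - 1).choose j : ℚ) * coeff (R := ℚ) n ((g - 1) ^ j) := by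
        refine Finset.sum_congr rfl fun j hj => ?_
        rw [T_id z n j (by simp at hj; omega)]
    _ = coeff (R := ℚ) n (H ^ z) := (negbinom_coeff (g - 1) H hgm1 hgH z n).symm
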